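/- Let A be a nonempty finite set, let B_A be either the set of all reflexive binary relations on A or the set of all irreflexive binary relations on A with the bounded distributive lattice structure (∪, ∩) and median μ', let N be a finite set with |N| odd, and let f : B_A^N → B_A be an aggregation rule. Then the following are equivalent: (i) f satisfies Anonymity and Bi-Idempotence and is strategy-proof on D^N for every rich domain D of locally unimodal preorders w.r.t. the median betweenness of (B_A,∪,∩); (ii) f is the majority rule f^maj(R_N) = ⋃_{S ∈ W^maj} (⋂_{i∈S} R_i), which moreover equals the co-majority rule f^∂maj(R_N) = ⋂_{S ∈ W^maj} (⋃_{i∈S} R_i), where W^maj = {S ⊆ N : |S| ≥ ⌊(|N|+2)/2⌋}; (iii) f is the generalized Condorcet-Kemeny rule on B_A for every tie-breaking linear order on B_A, i.e. at each profile it selects the (unique) relation in B_A minimizing the sum of Kemeny distances (sizes of symmetric differences) to the profile's relations. -/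

import Mathlib

/-- A preorder (reflexive transitive relation) on `X`, used as an agent's
preference over outcomes. -/
structure Pref (X : Type*) where
  rel : X → X → Prop
  refl : ∀ x, rel x x
  trans : ∀ x y z, rel x y → rel y z → rel x z

namespace Pref

/-- Strict (asymmetric) part of a preference preorder. -/
def strict {X : Type*} (R : Pref X) (x y : X) : Prop := R.rel x y ∧ ¬ R.rel y x

/-- `t` is the unique maximum of the preorder `R`. -/
def IsTop {X : Type*} (R : Pref X) (t : X) : Prop :=
  (∀ y, R.rel t y) ∧ ∀ t', (∀ y, R.rel t' y) → t' = t

end Pref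

/-- The interval `I^μ(x,y) = {z : z = μ(x,y,z)}` induced by a ternary median operation. -/
def medInterval {X : Type*} (μ : X → X → X → X) (x y : X) : Set X :=
  {z | μ x y z = z}

/-- A preorder on `X` is locally unimodal (single-peaked) w.r.t. the betweenness induced
by the median `μ`: it has a unique maximum `t`, and any outcome lying strictly between
`t` and another outcome `y` is not worse than `y`. -/
def LocallyUnimodal {X : Type*} (μ : X → X → X → X) (R : Pref X) : Prop :=
  ∃ t, R.IsTop t ∧ ∀ y z, z ∈ medInterval μ t y → z ≠ t → ¬ R.strict y z

/-- A rich domain of locally unimodal preorders: for all `x,y` it contains a preorder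
with top `x` whose upper contour set at `y` is exactly the interval `I^μ(x,y)`. -/
def RichDomain {X : Type*} (μ : X → X → X → X) (D : Set (Pref X)) : Prop :=
  (∀ R ∈ D, LocallyUnimodal μ R) ∧
  ∀ x y : X, ∃ R ∈ D, R.IsTop x ∧ {z | R.rel z y} = medInterval μ x y

/-- Strategy-proofness of an aggregation rule on profiles drawn from the domain `D`:
no agent `i` whose true preference lies in `D` (with top `tops i`) can strictly gain
by reporting `y` instead of her top. -/
def StrategyProofOn {X N : Type*} [DecidableEq N]
    (f : (N → X) → X) (D : Set (Pref X)) : Prop :=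
  ∀ prefs : N → Pref X, (∀ i, prefs i ∈ D) →
    ∀ tops : N → X, (∀ j, (prefs j).IsTop (tops j)) →
      ∀ (i : N) (y : X),
        ¬ (prefs i).strict (f (Function.update tops i y)) (f tops)

/-- `B_μ`-monotonicity: `f(x_N)` always lies in the median interval between `x_i` and
the outcome obtained when `i` deviates to `y`. -/
def BMuMonotonic {X N : Type*} [DecidableEq N]
    (μ : X → X → X → X) (f : (N → X) → X) : Prop :=
  ∀ (x : N → X) (i : N) (y : X),
    f x ∈ medInterval μ (x i) (f (Function.update x i y))

/-- `m` is meet-irreducible: whenever `m` is the greatest lower bound of a set `Y`,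
`m` itself belongs to `Y`. -/
def MeetIrred {X : Type*} [Preorder X] (m : X) : Prop :=
  ∀ Y : Set X, IsGLB Y m → m ∈ Y

/-- `j` is join-irreducible: whenever `j` is the least upper bound of a set `Y`,
`j` itself belongs to `Y`. -/
def JoinIrred {X : Type*} [Preorder X] (j : X) : Prop :=
  ∀ Y : Set X, IsLUB Y j → j ∈ Y

/-- Monotonic `M_X`-independence of an aggregation rule. -/
def MonotonicMIndependent {X N : Type*} [Preorder X] (f : (N → X) → X) : Prop :=
  ∀ (x y : N → X) (m : X), MeetIrred m →
    {i | x i ≤ m} ⊆ {i | y i ≤ m} → f x ≤ m → f y ≤ m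

/-- Upper distributivity: every principal order filter `↑u` is a distributive lattice,
expressed by the identity `x ⊔ (y ⊓ z) = (x ⊔ y) ⊓ (x ⊔ z)` for elements above a
common lower bound `u` (meets expressed via `IsGLB`). -/
def UpperDistributive (X : Type*) [SemilatticeSup X] : Prop :=
  ∀ u x y z m₁ m₂ : X, u ≤ x → u ≤ y → u ≤ z →
    IsGLB {y, z} m₁ → IsGLB {x ⊔ y, x ⊔ z} m₂ → x ⊔ m₁ = m₂

/-- Co-coronation (meet-Helly): if the three pairwise meets of `x,y,z` exist then the
meet of `{x,y,z}` exists. -/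
def MeetHelly (X : Type*) [SemilatticeSup X] : Prop :=
  ∀ x y z : X, (∃ a, IsGLB {x, y} a) → (∃ b, IsGLB {y, z} b) →
    (∃ c, IsGLB {x, z} c) → ∃ d, IsGLB ({x, y, z} : Set X) d

/-- `μ` is the median operation: `μ(x,y,z)` is the meet of `x⊔y`, `y⊔z`, `x⊔z`. -/
def IsMedianFn {X : Type*} [SemilatticeSup X] (μ : X → X → X → X) : Prop :=
  ∀ x y z : X, IsGLB {x ⊔ y, y ⊔ z, x ⊔ z} (μ x y z)

/-- Anonymity: invariance of the rule under permutations of the agents. -/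
def Anonymous {X N : Type*} (f : (N → X) → X) : Prop :=
  ∀ (x : N → X) (σ : Equiv.Perm N), f (x ∘ σ) = f x

/-- Bi-idempotence: if every agent proposes one of the two outcomes `y, z`, the rule
selects one of `y, z`. -/
def BiIdempotent {X N : Type*} (f : (N → X) → X) : Prop :=
  ∀ (x : N → X) (y z : X), (∀ i, x i = y ∨ x i = z) → f x = y ∨ f x = z

/-- The co-majority rule: `f(x_N)` is the meet over all majority coalitions `S`
(of size at least `⌊(|N|+2)/2⌋`) of the joins `⋁_{i ∈ S} x_i`. -/
def IsCoMajority {X N : Type*} [SemilatticeSup X] [Fintype N] (f : (N → X) → X) : Prop :=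
  ∀ x : N → X,
    IsGLB {z | ∃ S : Finset N, (Fintype.card N + 2) / 2 ≤ S.card ∧ IsLUB (x '' ↑S) z} (f x)

/-- An order filter of the poset of coalitions `(P(N), ⊆)`. -/
def OrderFilterN {N : Type*} (F : Set (Set N)) : Prop :=
  ∀ S T : Set N, S ∈ F → S ⊆ T → T ∈ F

/-- The locally `m`-winning coalitions of the rule `f`. -/
def winningCoalitions {X N : Type*} [Preorder X] (f : (N → X) → X) (m : X) : Set (Set N) :=
  {T | ∃ x : N → X, {i | x i ≤ m} = T ∧ f x ≤ m}

/-- Shortest-path distance in the covering graph of a partial order. -/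
noncomputable def covDist {X : Type*} [PartialOrder X] (x y : X) : ℕ :=
  sInf {n | ∃ p : ℕ → X, p 0 = x ∧ p n = y ∧ ∀ k < n, p k ⋖ p (k + 1) ∨ p (k + 1) ⋖ p k}

/-- The collection `B_A` of binary relations on `A` satisfying the predicate `P`
(e.g. all reflexive relations, or all irreflexive relations). -/
def RelSub (A : Type*) (P : (A → A → Prop) → Prop) : Type _ :=
  {R : A → A → Prop // P R}

/-- The predicate `P` is closed under pointwise union and intersection of relations
(as are reflexivity and irreflexivity). -/
class RelClosed (A : Type*) (P : (A → A → Prop) → Prop) : Prop where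
  or_closed : ∀ R S : A → A → Prop, P R → P S → P (fun a b => R a b ∨ S a b)
  and_closed : ∀ R S : A → A → Prop, P R → P S → P (fun a b => R a b ∧ S a b)

instance (A : Type*) : RelClosed A (@Reflexive A) where
  or_closed _ _ hR _ := fun a => Or.inl (hR a)
  and_closed _ _ hR hS := fun a => ⟨hR a, hS a⟩

instance (A : Type*) : RelClosed A (@Irreflexive A) where
  or_closed _ _ hR hS := fun a h => h.elim (hR a) (hS a)
  and_closed _ _ hR _ := fun a h => hR a h.1

namespace RelSub

variable {A : Type*} {P : (A → A → Prop) → Prop}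

/-- Relations in `B_A` are ordered by set inclusion. -/
instance : PartialOrder (RelSub A P) where
  le R S := ∀ a b, R.1 a b → S.1 a b
  le_refl R := fun _ _ h => h
  le_trans R S T h₁ h₂ := fun a b h => h₂ a b (h₁ a b h)
  le_antisymm R S h₁ h₂ :=
    Subtype.ext (funext fun a => funext fun b => propext ⟨h₁ a b, h₂ a b⟩)

/-- The lattice median `μ'(R₁,R₂,R₃) = (R₁∪R₂) ∩ (R₂∪R₃) ∩ (R₃∪R₁)`. -/
def median [RelClosed A P] (R₁ R₂ R₃ : RelSub A P) : RelSub A P :=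
  ⟨fun a b => (R₁.1 a b ∨ R₂.1 a b) ∧ (R₂.1 a b ∨ R₃.1 a b) ∧ (R₃.1 a b ∨ R₁.1 a b),
    RelClosed.and_closed _ _ (RelClosed.or_closed _ _ R₁.2 R₂.2)
      (RelClosed.and_closed _ _ (RelClosed.or_closed _ _ R₂.2 R₃.2)
        (RelClosed.or_closed _ _ R₃.2 R₁.2))⟩

end RelSub

/-- Monotonic `J_X`-independence (the dual of monotonic `M_X`-independence). -/
def MonotonicJIndependent {X N : Type*} [Preorder X] (f : (N → X) → X) : Prop :=
  ∀ (x y : N → X) (j : X), JoinIrred j →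
    {i | j ≤ x i} ⊆ {i | j ≤ y i} → j ≤ f x → j ≤ f y

/-- Monotonic independence of irrelevant alternatives for relation-valued rules. -/
def MonotonicIIA {A N : Type*} {P : (A → A → Prop) → Prop}
    (f : (N → RelSub A P) → RelSub A P) : Prop :=
  ∀ (R R' : N → RelSub A P) (u v : A),
    {i | (R i).1 u v} ⊆ {i | (R' i).1 u v} → (f R).1 u v → (f R').1 u v

/-- The Kemeny distance between two relations: the number of ordered pairs in their
symmetric difference. -/
noncomputable def kemenyDist {A : Type*} {P : (A → A → Prop) → Prop}
    (R S : RelSub A P) : ℕ :=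
  Set.ncard {p : A × A |
    (R.1 p.1 p.2 ∧ ¬ S.1 p.1 p.2) ∨ (S.1 p.1 p.2 ∧ ¬ R.1 p.1 p.2)}

section MedianFacts

open Classical

variable {A : Type*} {P : (A → A → Prop) → Prop} [RelClosed A P]

lemma mem_medInterval_iff (x y z : RelSub A P) :
    z ∈ medInterval (RelSub.median (P := P)) x y ↔
      ∀ a b, (z.1 a b ↔ x.1 a b) ∨ (z.1 a b ↔ y.1 a b) := by
  have h : (RelSub.median x y z = z) ↔ ∀ a b,
      (((x.1 a b ∨ y.1 a b) ∧ (y.1 a b ∨ z.1 a b) ∧ (z.1 a b ∨ x.1 a b)) ↔ z.1 a b) := by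
    rw [show (RelSub.median x y z = z) ↔ (RelSub.median x y z).1 = z.1 from Subtype.ext_iff,
      funext_iff]
    refine forall_congr' fun a => ?_
    rw [funext_iff]
    exact forall_congr' fun b => eq_iff_iff
  rw [medInterval, Set.mem_setOf_eq, h]
  constructor <;> intro h' a b <;> have := h' a b <;> tauto

lemma left_mem_medInterval (x y : RelSub A P) :
    x ∈ medInterval (RelSub.median (P := P)) x y :=
  (mem_medInterval_iff x y x).2 fun _ _ => Or.inl Iff.rfl

lemma right_mem_medInterval (x y : RelSub A P) :
    y ∈ medInterval (RelSub.median (P := P)) x y :=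
  (mem_medInterval_iff x y y).2 fun _ _ => Or.inr Iff.rfl

lemma eq_of_mem_medInterval_self {x z : RelSub A P}
    (h : z ∈ medInterval (RelSub.median (P := P)) x x) : z = x := by
  have := (mem_medInterval_iff x x z).1 h
  refine Subtype.ext (funext fun a => funext fun b => propext ?_)
  have := this a b
  tauto

lemma medInterval_subset {x y y' : RelSub A P}
    (h : y' ∈ medInterval (RelSub.median (P := P)) x y) :
    medInterval (RelSub.median (P := P)) x y' ⊆
      medInterval (RelSub.median (P := P)) x y := by
  intro z hz
  rw [mem_medInterval_iff] at *
  intro a b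
  have h1 := h a b
  have h2 := hz a b
  tauto

end MedianFacts
section LevelPref

open Classical

variable {A : Type*} {P : (A → A → Prop) → Prop} [RelClosed A P]

/-- Level of `z` in the three-tier preference with peak `x` and reference `y`. -/
noncomputable def relLvl (x y z : RelSub A P) : ℕ :=
  if z = x then 0
  else if z ∈ medInterval (RelSub.median (P := P)) x y then 1 else 2

/-- The canonical rich-domain preference: a three-tier preorder with peak `x`,
second tier the interval `I(x,y)` and bottom tier everything else. -/
noncomputable def levelPref (x y : RelSub A P) : Pref (RelSub A P) where
  rel z w := relLvl x y z ≤ relLvl x y w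
  refl _ := le_refl _
  trans _ _ _ h₁ h₂ := le_trans h₁ h₂

lemma relLvl_self (x y : RelSub A P) : relLvl x y x = 0 := by simp [relLvl]

lemma relLvl_eq_zero_iff {x y z : RelSub A P} : relLvl x y z = 0 ↔ z = x := by
  unfold relLvl; split
  · simp [*]
  · split <;> simp [*]

lemma relLvl_le_one_iff {x y z : RelSub A P} :
    relLvl x y z ≤ 1 ↔ z ∈ medInterval (RelSub.median (P := P)) x y := by
  unfold relLvl; split
  · rename_i h; simp only [Nat.zero_le, true_iff]; rw [h]; exact left_mem_medInterval x y
  · split <;> simp [*]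

lemma levelPref_top (x y : RelSub A P) : (levelPref x y).IsTop x := by
  constructor
  · intro w; show relLvl x y x ≤ _; rw [relLvl_self]; exact Nat.zero_le _
  · intro t' ht'
    have := ht' x
    simp only [levelPref] at this
    rw [relLvl_self, Nat.le_zero] at this
    exact relLvl_eq_zero_iff.1 this

lemma levelPref_uc (x y : RelSub A P) :
    {z | (levelPref x y).rel z y} = medInterval (RelSub.median (P := P)) x y := by
  ext z
  show relLvl x y z ≤ relLvl x y y ↔ _
  by_cases hy : y = x
  · rw [hy, relLvl_self, Nat.le_zero, relLvl_eq_zero_iff]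
    constructor
    · intro h; rw [h]; exact left_mem_medInterval x x
    · exact fun h => eq_of_mem_medInterval_self h
  · have hy1 : relLvl x y y = 1 := by
      unfold relLvl
      rw [if_neg hy, if_pos (right_mem_medInterval x y)]
    rw [hy1, relLvl_le_one_iff]

lemma levelPref_unimodal (x y : RelSub A P) :
    LocallyUnimodal (RelSub.median (P := P)) (levelPref x y) := by
  refine ⟨x, levelPref_top x y, ?_⟩
  rintro y' z hz hzx ⟨h1, h2⟩
  simp only [levelPref] at h1 h2
  have hlt : relLvl x y y' < relLvl x y z := by omega
  by_cases hmem : z ∈ medInterval (RelSub.median (P := P)) x y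
  · have hz1 : relLvl x y z = 1 := by unfold relLvl; rw [if_neg hzx, if_pos hmem]
    have : relLvl x y y' = 0 := by omega
    have hy'x : y' = x := relLvl_eq_zero_iff.1 this
    subst hy'x
    exact hzx (eq_of_mem_medInterval_self hz)
  · have hy' : relLvl x y y' ≤ 1 := by
      have hle2 : relLvl x y z ≤ 2 := by
        unfold relLvl
        split
        all_goals first | omega | (split <;> omega)
      omega
    have : y' ∈ medInterval (RelSub.median (P := P)) x y := relLvl_le_one_iff.1 hy'
    exact hmem (medInterval_subset this hz)

/-- The canonical rich domain used to extract `B_μ`-monotonicity from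
strategy-proofness. -/
def levelDomain (A : Type*) (P : (A → A → Prop) → Prop) [RelClosed A P] :
    Set (Pref (RelSub A P)) :=
  {R | ∃ x y : RelSub A P, R = levelPref x y}

lemma levelDomain_rich :
    RichDomain (RelSub.median (P := P)) (levelDomain A P) := by
  constructor
  · rintro R ⟨x, y, rfl⟩; exact levelPref_unimodal x y
  · intro x y
    exact ⟨levelPref x y, ⟨x, y, rfl⟩, levelPref_top x y, levelPref_uc x y⟩

variable {N : Type*} [DecidableEq N]

/-- Strategy-proofness on all rich domains yields `B_μ`-monotonicity. -/
lemma sp_bmu {f : (N → RelSub A P) → RelSub A P}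
    (hsp : ∀ D : Set (Pref (RelSub A P)),
      RichDomain (RelSub.median (P := P)) D → StrategyProofOn f D) :
    ∀ (x : N → RelSub A P) (i : N) (y : RelSub A P),
      f x ∈ medInterval (RelSub.median (P := P)) (x i) (f (Function.update x i y)) := by
  intro x i y
  set q := f (Function.update x i y) with hq
  have hsp' := hsp (levelDomain A P) levelDomain_rich
    (fun j => levelPref (x j) q) (fun j => ⟨x j, q, rfl⟩) x
    (fun j => levelPref_top (x j) q) i y
  by_contra hmem
  apply hsp'
  constructor
  · show relLvl (x i) q q ≤ relLvl (x i) q (f x)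
    have h1 : relLvl (x i) q q ≤ 1 := relLvl_le_one_iff.2 (right_mem_medInterval _ _)
    have h2 : relLvl (x i) q (f x) = 2 := by
      unfold relLvl
      rw [if_neg (fun h => hmem (by rw [h]; exact left_mem_medInterval (x i) q)), if_neg hmem]
    omega
  · show ¬ (relLvl (x i) q (f x) ≤ relLvl (x i) q q)
    have h1 : relLvl (x i) q q ≤ 1 := relLvl_le_one_iff.2 (right_mem_medInterval _ _)
    have h2 : relLvl (x i) q (f x) = 2 := by
      unfold relLvl
      rw [if_neg (fun h => hmem (by rw [h]; exact left_mem_medInterval (x i) q)), if_neg hmem]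
    omega

end LevelPref
open scoped Classical in
/-- Number of agents whose reported relation contains the pair `(a,b)`. -/
noncomputable def relCnt {A : Type*} {P : (A → A → Prop) → Prop}
    {N : Type*} [Fintype N] (x : N → RelSub A P) (a b : A) : ℕ :=
  (Finset.univ.filter fun i => (x i).1 a b).card

section Mono

open Classical Finset

variable {A : Type*} {P : (A → A → Prop) → Prop} [RelClosed A P]
variable {N : Type*} [Fintype N] [DecidableEq N]
variable {f : (N → RelSub A P) → RelSub A P}

/-- Abbreviation for the `B_μ`-monotonicity property we use throughout. -/
def BMu (f : (N → RelSub A P) → RelSub A P) : Prop :=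
  ∀ (x : N → RelSub A P) (i : N) (y : RelSub A P),
    f x ∈ medInterval (RelSub.median (P := P)) (x i) (f (Function.update x i y))

lemma outcome_mono_single (hB : BMu f) (x : N → RelSub A P) (i : N)
    (Q : RelSub A P) (a b : A) (him : (x i).1 a b → Q.1 a b)
    (hf : (f x).1 a b) : (f (Function.update x i Q)).1 a b := by
  have h1 := (mem_medInterval_iff _ _ _).1 (hB x i Q) a b
  have hx : Function.update (Function.update x i Q) i (x i) = x := by
    rw [Function.update_idem, Function.update_eq_self]
  have h2 := (mem_medInterval_iff _ _ _).1 (hB (Function.update x i Q) i (x i)) a b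
  rw [hx] at h2
  simp only [Function.update_self] at h2
  tauto

lemma outcome_mono (hB : BMu f) (x y : N → RelSub A P) (a b : A)
    (hsub : ∀ i, (x i).1 a b → (y i).1 a b) (hf : (f x).1 a b) :
    (f y).1 a b := by
  have key : ∀ s : Finset N, (f (fun i => if i ∈ s then y i else x i)).1 a b := by
    intro s
    induction s using Finset.induction_on with
    | empty => simpa using hf
    | @insert j s hj ih =>
      have hprof : (fun i => if i ∈ insert j s then y i else x i)
          = Function.update (fun i => if i ∈ s then y i else x i) j (y j) := by
        funext i
        by_cases h : i = j
        · subst h; simp [hj]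
        · rw [Function.update_of_ne h]
          simp [Finset.mem_insert, h]
      rw [hprof]
      refine outcome_mono_single hB _ j (y j) a b ?_ ih
      rw [if_neg hj]; exact hsub j
  have h := key Finset.univ
  simpa using h

lemma outcome_congr (hB : BMu f) (x y : N → RelSub A P) (a b : A)
    (h : ∀ i, (x i).1 a b ↔ (y i).1 a b) : ((f x).1 a b ↔ (f y).1 a b) :=
  ⟨outcome_mono hB x y a b (fun i => (h i).1),
   outcome_mono hB y x a b (fun i => (h i).2)⟩

lemma exists_perm_finset (S T : Finset N) (h : S.card = T.card) :
    ∃ σ : Equiv.Perm N, ∀ i, σ i ∈ T ↔ i ∈ S := by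
  have h1 : Fintype.card {i // i ∈ S} = Fintype.card {i // i ∈ T} := by
    simp only [Fintype.card_coe, h]
  have h2 : Fintype.card {i // ¬ i ∈ S} = Fintype.card {i // ¬ i ∈ T} := by
    rw [Fintype.card_subtype_compl, Fintype.card_subtype_compl, h1]
  refine ⟨Equiv.subtypeCongr (Fintype.equivOfCardEq h1) (Fintype.equivOfCardEq h2), ?_⟩
  intro i
  by_cases hi : i ∈ S
  · simp only [Equiv.subtypeCongr, Equiv.trans_apply,
      Equiv.sumCompl_symm_apply_of_pos hi, Equiv.sumCongr_apply, Sum.map_inl,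
      Equiv.sumCompl_apply_inl]
    exact iff_of_true (Fintype.equivOfCardEq h1 ⟨i, hi⟩).2 hi
  · simp only [Equiv.subtypeCongr, Equiv.trans_apply,
      Equiv.sumCompl_symm_apply_of_neg hi, Equiv.sumCongr_apply, Sum.map_inr,
      Equiv.sumCompl_apply_inr]
    exact iff_of_false (Fintype.equivOfCardEq h2 ⟨i, hi⟩).2 hi

end Mono
section CountChar

open Classical Finset

variable {A : Type*} {P : (A → A → Prop) → Prop} [RelClosed A P]
variable {N : Type*} [Fintype N] [DecidableEq N]
variable {f : (N → RelSub A P) → RelSub A P}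

/-- The central characterization: under Anonymity, Bi-Idempotence and
`B_μ`-monotonicity, the outcome contains a pair iff a majority of agents do. -/
lemma count_char
    (hdiag : ∀ (R S : RelSub A P) (a : A), R.1 a a ↔ S.1 a a)
    (hmk : ∀ q : A → A → Prop, ∃ Q : RelSub A P, ∀ u v, u ≠ v → (Q.1 u v ↔ q u v))
    (hodd : Odd (Fintype.card N))
    (hAnon : Anonymous f) (hBi : BiIdempotent f) (hB : BMu f) :
    ∀ (x : N → RelSub A P) (a b : A),
      (f x).1 a b ↔ (Fintype.card N + 2) / 2 ≤ relCnt x a b := by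
  obtain ⟨k, hk⟩ := hodd
  set n := Fintype.card N with hn
  set m := (n + 2) / 2 with hm
  have hmk1 : m = k + 1 := by omega
  intro x a b
  by_cases hab : a = b
  · subst hab
    by_cases hfa : (f x).1 a a
    · refine iff_of_true hfa ?_
      have hall : ∀ i, (x i).1 a a := fun i => (hdiag (f x) (x i) a).1 hfa
      have : relCnt x a a = n := by
        rw [relCnt, Finset.filter_true_of_mem (fun i _ => hall i), Finset.card_univ]
      omega
    · refine iff_of_false hfa ?_
      have hnone : ∀ i, ¬ (x i).1 a a := fun i h => hfa ((hdiag (x i) (f x) a).1 h)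
      have : relCnt x a a = 0 := by
        rw [relCnt, Finset.filter_false_of_mem (fun i _ => hnone i), Finset.card_empty]
      omega
  · obtain ⟨Ya, hYa⟩ := hmk fun u v => u = a ∧ v = b
    obtain ⟨Zb, hZb⟩ := hmk fun u v => u = b ∧ v = a
    obtain ⟨W, hW⟩ := hmk fun u v => (u = a ∧ v = b) ∨ (u = b ∧ v = a)
    obtain ⟨O, hO⟩ := hmk fun _ _ => False
    have hba : b ≠ a := Ne.symm hab
    have hYab : Ya.1 a b := (hYa a b hab).2 ⟨rfl, rfl⟩
    have hYba : ¬ Ya.1 b a := fun h => hba (((hYa b a hba).1 h).1)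
    have hZab : ¬ Zb.1 a b := fun h => hab (((hZb a b hab).1 h).1)
    have hZba : Zb.1 b a := (hZb b a hba).2 ⟨rfl, rfl⟩
    have hWab : W.1 a b := (hW a b hab).2 (Or.inl ⟨rfl, rfl⟩)
    have hWba : W.1 b a := (hW b a hba).2 (Or.inr ⟨rfl, rfl⟩)
    have hOab : ¬ O.1 a b := fun h => (hO a b hab).1 h
    have hOba : ¬ O.1 b a := fun h => (hO b a hba).1 h
    set eS : Finset N → (N → RelSub A P) := fun S i => if i ∈ S then Ya else Zb with heS
    set eW : Finset N → (N → RelSub A P) := fun S i => if i ∈ S then W else O with heW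
    set g : Finset N → Prop := fun S => (f (eS S)).1 a b with hg
    have heS_ab : ∀ (S : Finset N) i, ((eS S i).1 a b ↔ i ∈ S) := by
      intro S i; by_cases h : i ∈ S <;> simp [heS, h, hYab, hZab]
    have heS_ba : ∀ (S : Finset N) i, ((eS S i).1 b a ↔ i ∉ S) := by
      intro S i; by_cases h : i ∈ S <;> simp [heS, h, hYba, hZba]
    have heW_ab : ∀ (S : Finset N) i, ((eW S i).1 a b ↔ i ∈ S) := by
      intro S i; by_cases h : i ∈ S <;> simp [heW, h, hWab, hOab]
    have heW_ba : ∀ (S : Finset N) i, ((eW S i).1 b a ↔ i ∈ S) := by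
      intro S i; by_cases h : i ∈ S <;> simp [heW, h, hWba, hOba]
    have hgx : ∀ y : N → RelSub A P,
        ((f y).1 a b ↔ g (univ.filter fun i => (y i).1 a b)) := by
      intro y
      refine outcome_congr hB _ _ a b fun i => ?_
      rw [heS_ab]; simp
    have hgmono : ∀ S T : Finset N, S ⊆ T → g S → g T := by
      intro S T hST
      exact outcome_mono hB _ _ a b fun i hi => (heS_ab T i).2 (hST ((heS_ab S i).1 hi))
    have hgcard : ∀ S T : Finset N, S.card = T.card → (g S ↔ g T) := by
      intro S T hc
      obtain ⟨σ, hσ⟩ := exists_perm_finset S T hc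
      have hcomp : eS T ∘ σ = eS S := by
        funext i
        show (if σ i ∈ T then Ya else Zb) = (if i ∈ S then Ya else Zb)
        exact if_congr (hσ i) rfl rfl
      have := hAnon (eS T) σ
      rw [hcomp] at this
      show (f (eS S)).1 a b ↔ (f (eS T)).1 a b
      rw [this]
    have hbi1 : ∀ S : Finset N, ((f (eS S)).1 a b ↔ ¬ (f (eS S)).1 b a) := by
      intro S
      rcases hBi (eS S) Ya Zb (fun i => by by_cases h : i ∈ S <;> simp [heS, h]) with h | h <;>
        rw [h]
      · exact iff_of_true hYab (by simp [hYba])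
      · exact iff_of_false hZab (by simp [hZba])
    have hbi2 : ∀ S : Finset N, ((f (eW S)).1 a b ↔ (f (eW S)).1 b a) := by
      intro S
      rcases hBi (eW S) W O (fun i => by by_cases h : i ∈ S <;> simp [heW, h]) with h | h <;>
        rw [h]
      · exact iff_of_true hWab hWba
      · exact iff_of_false hOab hOba
    have h_ee : ∀ S : Finset N, ((f (eS S)).1 a b ↔ (f (eW S)).1 a b) := by
      intro S
      refine outcome_congr hB _ _ a b fun i => ?_
      rw [heS_ab, heW_ab]
    have h_ee_ba : ∀ S : Finset N, ((f (eS S)).1 b a ↔ (f (eW Sᶜ)).1 b a) := by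
      intro S
      refine outcome_congr hB _ _ b a fun i => ?_
      rw [heS_ba, heW_ba, Finset.mem_compl]
    have hxor : ∀ S : Finset N, (g S ↔ ¬ g Sᶜ) := by
      intro S
      have h1 := hbi1 S
      have h2 := h_ee_ba S
      have h3 := hbi2 Sᶜ
      have h4 := h_ee Sᶜ
      show (f (eS S)).1 a b ↔ ¬ (f (eS Sᶜ)).1 a b
      tauto
    have hclaim : ∀ S : Finset N, S.card = m → g S := by
      intro S hS
      by_contra hgS
      have hgSc : g Sᶜ := by have := hxor S; tauto
      have hcard : Sᶜ.card = n - m := by rw [Finset.card_compl, hS]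
      obtain ⟨T, hsub, _, hTcard⟩ :=
        Finset.exists_subsuperset_card_eq (Finset.subset_univ Sᶜ)
          (show Sᶜ.card ≤ m by omega) (show m ≤ Finset.univ.card by rw [Finset.card_univ]; omega)
      exact hgS ((hgcard S T (by rw [hS, hTcard])).2 (hgmono _ _ hsub hgSc))
    rw [hgx x]
    have hFc : relCnt x a b = (univ.filter fun i => (x i).1 a b).card := rfl
    constructor
    · intro hgF
      by_contra hm'
      have hcc : m ≤ (univ.filter fun i => (x i).1 a b)ᶜ.card := by
        rw [Finset.card_compl]
        have := Finset.card_filter_le (univ : Finset N) fun i => (x i).1 a b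
        rw [Finset.card_univ] at this
        omega
      obtain ⟨T, hTsub, hTcard⟩ := Finset.exists_subset_card_eq hcc
      exact (hxor _).1 hgF (hgmono T _ hTsub (hclaim T hTcard))
    · intro hm'
      obtain ⟨T, hTsub, hTcard⟩ := Finset.exists_subset_card_eq (hFc ▸ hm')
      exact hgmono T _ hTsub (hclaim T hTcard)

end CountChar
section FromCount

open Classical Finset

variable {A : Type*} {P : (A → A → Prop) → Prop} [RelClosed A P]
variable {N : Type*} [Fintype N] [DecidableEq N]
variable {f : (N → RelSub A P) → RelSub A P}

lemma anon_of_count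
    (hcount : ∀ (x : N → RelSub A P) (a b : A),
      (f x).1 a b ↔ (Fintype.card N + 2) / 2 ≤ relCnt x a b) :
    Anonymous f := by
  intro x σ
  refine Subtype.ext (funext fun a => funext fun b => propext ?_)
  have hc : relCnt (x ∘ σ) a b = relCnt x a b := by
    refine Finset.card_bij (fun i _ => σ i) ?_ ?_ ?_
    · intro i hi
      simp only [Finset.mem_filter, Finset.mem_univ, true_and, Function.comp_apply] at hi ⊢
      exact hi
    · intro i _ j _ h
      exact σ.injective h
    · intro j hj
      refine ⟨σ.symm j, ?_, by simp⟩
      simp only [Finset.mem_filter, Finset.mem_univ, true_and, Function.comp_apply,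
        Equiv.apply_symm_apply] at hj ⊢
      exact hj
  rw [hcount, hcount, hc]

lemma bi_aux
    (hodd : Odd (Fintype.card N))
    (hcount : ∀ (x : N → RelSub A P) (a b : A),
      (f x).1 a b ↔ (Fintype.card N + 2) / 2 ≤ relCnt x a b)
    (x : N → RelSub A P) (y z : RelSub A P)
    (hxy : ∀ i, x i = y ∨ x i = z)
    (hs : (Fintype.card N + 2) / 2 ≤ (univ.filter fun i => x i = y).card) :
    f x = y := by
  obtain ⟨k, hk⟩ := hodd
  set n := Fintype.card N with hn
  set m := (n + 2) / 2 with hm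
  have hmk1 : m = k + 1 := by omega
  refine Subtype.ext (funext fun a => funext fun b => propext ?_)
  rw [hcount]
  have hcle : relCnt x a b ≤ n := by
    have := Finset.card_filter_le (univ : Finset N) fun i => (x i).1 a b
    rw [Finset.card_univ] at this
    exact this
  by_cases hy : y.1 a b <;> by_cases hz : z.1 a b
  · refine iff_of_true ?_ hy
    have : relCnt x a b = n := by
      rw [relCnt, Finset.filter_true_of_mem, Finset.card_univ]
      intro i _
      rcases hxy i with h | h <;> rw [h] <;> assumption
    omega
  · refine iff_of_true ?_ hy
    have hsub : (univ.filter fun i => x i = y) ⊆ (univ.filter fun i => (x i).1 a b) := by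
      intro i hi
      simp only [Finset.mem_filter, Finset.mem_univ, true_and] at *
      rw [hi]; exact hy
    have := Finset.card_le_card hsub
    rw [relCnt]
    omega
  · refine iff_of_false ?_ hy
    have hsub : (univ.filter fun i => (x i).1 a b) ⊆ (univ.filter fun i => x i = y)ᶜ := by
      intro i hi
      simp only [Finset.mem_compl, Finset.mem_filter, Finset.mem_univ, true_and] at *
      intro he
      rw [he] at hi
      exact hy hi
    have h1 := Finset.card_le_card hsub
    rw [Finset.card_compl] at h1
    rw [relCnt] at *
    omega
  · refine iff_of_false ?_ hy
    have : relCnt x a b = 0 := by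
      rw [relCnt, Finset.filter_false_of_mem, Finset.card_empty]
      intro i _ hi
      rcases hxy i with h | h <;> rw [h] at hi <;> [exact hy hi; exact hz hi]
    omega

lemma biIdem_of_count
    (hodd : Odd (Fintype.card N))
    (hcount : ∀ (x : N → RelSub A P) (a b : A),
      (f x).1 a b ↔ (Fintype.card N + 2) / 2 ≤ relCnt x a b) :
    BiIdempotent f := by
  intro x y z hxy
  obtain ⟨k, hk⟩ := hodd
  set n := Fintype.card N with hn
  set m := (n + 2) / 2 with hm
  by_cases hs : m ≤ (univ.filter fun i => x i = y).card
  · exact Or.inl (bi_aux ⟨k, hk⟩ hcount x y z hxy hs)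
  · refine Or.inr (bi_aux ⟨k, hk⟩ hcount x z y (fun i => (hxy i).symm) ?_)
    have hsub : (univ.filter fun i => x i = y)ᶜ ⊆ (univ.filter fun i => x i = z) := by
      intro i hi
      simp only [Finset.mem_compl, Finset.mem_filter, Finset.mem_univ, true_and] at *
      rcases hxy i with h | h
      · exact absurd h hi
      · exact h
    have h1 := Finset.card_le_card hsub
    rw [Finset.card_compl] at h1
    have h2 := Finset.card_filter_le (univ : Finset N) fun i => x i = y
    rw [Finset.card_univ] at h2
    omega

lemma bmu_of_count
    (hcount : ∀ (x : N → RelSub A P) (a b : A),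
      (f x).1 a b ↔ (Fintype.card N + 2) / 2 ≤ relCnt x a b) :
    BMu f := by
  intro x i y
  rw [mem_medInterval_iff]
  intro a b
  have hcnt_eq : ((x i).1 a b ↔ y.1 a b) →
      relCnt x a b = relCnt (Function.update x i y) a b := by
    intro hiff
    rw [relCnt, relCnt]
    congr 1
    apply Finset.filter_congr
    intro j _
    by_cases hj : j = i
    · rw [hj, Function.update_self]
      exact hiff
    · rw [Function.update_of_ne hj]
  by_cases hxi : (x i).1 a b <;> by_cases hyv : y.1 a b
  · exact Or.inr (by rw [hcount, hcount, hcnt_eq (iff_of_true hxi hyv)])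
  · by_cases hfx : (f x).1 a b
    · exact Or.inl (iff_of_true hfx hxi)
    · refine Or.inr (iff_of_false hfx ?_)
      have hsub : (univ.filter fun j => (Function.update x i y j).1 a b) ⊆
          (univ.filter fun j => (x j).1 a b) := by
        intro j hj
        simp only [Finset.mem_filter, Finset.mem_univ, true_and] at hj ⊢
        by_cases h : j = i
        · rw [h, Function.update_self] at hj; exact absurd hj hyv
        · rwa [Function.update_of_ne h] at hj
      have h1 := Finset.card_le_card hsub
      rw [hcount] at hfx ⊢
      rw [relCnt] at *
      omega
  · by_cases hfx : (f x).1 a b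
    · refine Or.inr (iff_of_true hfx ?_)
      have hsub : (univ.filter fun j => (x j).1 a b) ⊆
          (univ.filter fun j => (Function.update x i y j).1 a b) := by
        intro j hj
        simp only [Finset.mem_filter, Finset.mem_univ, true_and] at hj ⊢
        by_cases h : j = i
        · rw [h] at hj; exact absurd hj hxi
        · rwa [Function.update_of_ne h]
      have h1 := Finset.card_le_card hsub
      rw [hcount] at hfx ⊢
      rw [relCnt] at *
      omega
    · exact Or.inl (iff_of_false hfx hxi)
  · exact Or.inr (by rw [hcount, hcount, hcnt_eq (iff_of_false hxi hyv)])

lemma sp_of_bmu (hB : BMu f) :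
    ∀ D : Set (Pref (RelSub A P)),
      RichDomain (RelSub.median (P := P)) D → StrategyProofOn f D := by
  intro D hD prefs hprefs tops htops i y hstrict
  obtain ⟨t, htop, huni⟩ := hD.1 _ (hprefs i)
  have hti : tops i = t := htop.2 _ (htops i).1
  have hmem := hB tops i y
  rw [hti] at hmem
  by_cases hz : f tops = t
  · exact hstrict.2 (hz ▸ htop.1 (f (Function.update tops i y)))
  · exact huni _ _ hmem hz hstrict

lemma count_iff_exists
    (x : N → RelSub A P) (a b : A) :
    (Fintype.card N + 2) / 2 ≤ relCnt x a b ↔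
      ∃ S : Finset N, (Fintype.card N + 2) / 2 ≤ S.card ∧ ∀ i ∈ S, (x i).1 a b := by
  constructor
  · intro h
    refine ⟨univ.filter fun i => (x i).1 a b, h, ?_⟩
    intro i hi
    simp only [Finset.mem_filter] at hi
    exact hi.2
  · rintro ⟨S, hS, hall⟩
    have hsub : S ⊆ univ.filter fun i => (x i).1 a b := by
      intro i hi
      simp only [Finset.mem_filter, Finset.mem_univ, true_and]
      exact hall i hi
    have := Finset.card_le_card hsub
    rw [relCnt]
    omega

lemma count_iff_forall
    (hodd : Odd (Fintype.card N))
    (x : N → RelSub A P) (a b : A) :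
    (Fintype.card N + 2) / 2 ≤ relCnt x a b ↔
      ∀ S : Finset N, (Fintype.card N + 2) / 2 ≤ S.card → ∃ i ∈ S, (x i).1 a b := by
  obtain ⟨k, hk⟩ := hodd
  set n := Fintype.card N with hn
  set m := (n + 2) / 2 with hm
  have hcle : relCnt x a b ≤ n := by
    have := Finset.card_filter_le (univ : Finset N) fun i => (x i).1 a b
    rw [Finset.card_univ] at this
    exact this
  constructor
  · intro h S hS
    by_contra hc
    push_neg at hc
    have hsub : S ⊆ (univ.filter fun i => (x i).1 a b)ᶜ := by
      intro i hi
      simp only [Finset.mem_compl, Finset.mem_filter, Finset.mem_univ, true_and]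
      exact hc i hi
    have h1 := Finset.card_le_card hsub
    rw [Finset.card_compl] at h1
    rw [relCnt] at *
    omega
  · intro h
    by_contra hc
    have hcard : m ≤ ((univ.filter fun i => (x i).1 a b)ᶜ).card := by
      rw [Finset.card_compl]
      rw [relCnt] at *
      omega
    obtain ⟨i, hi, hxi⟩ := h _ hcard
    simp only [Finset.mem_compl, Finset.mem_filter, Finset.mem_univ, true_and] at hi
    exact hi hxi

end FromCount
open scoped Classical in
/-- Per-pair disagreement cost of a candidate relation against a profile. -/
noncomputable def pcost {A : Type*} {P : (A → A → Prop) → Prop}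
    {N : Type*} [Fintype N] (R' : RelSub A P) (R : N → RelSub A P) (p : A × A) : ℕ :=
  (Finset.univ.filter fun i =>
    (R'.1 p.1 p.2 ∧ ¬ (R i).1 p.1 p.2) ∨ ((R i).1 p.1 p.2 ∧ ¬ R'.1 p.1 p.2)).card

section Kemeny

open Classical Finset

variable {A : Type*} [Fintype A] {P : (A → A → Prop) → Prop}
variable {N : Type*} [Fintype N]

lemma kemenyDist_eq_card (R' S : RelSub A P) :
    kemenyDist R' S = ((Finset.univ : Finset (A × A)).filter fun p =>
      (R'.1 p.1 p.2 ∧ ¬ S.1 p.1 p.2) ∨ (S.1 p.1 p.2 ∧ ¬ R'.1 p.1 p.2)).card := by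
  rw [kemenyDist]
  have h : {p : A × A | (R'.1 p.1 p.2 ∧ ¬ S.1 p.1 p.2) ∨ (S.1 p.1 p.2 ∧ ¬ R'.1 p.1 p.2)}
      = ↑((Finset.univ : Finset (A × A)).filter fun p =>
        (R'.1 p.1 p.2 ∧ ¬ S.1 p.1 p.2) ∨ (S.1 p.1 p.2 ∧ ¬ R'.1 p.1 p.2)) := by
    ext p; simp
  rw [h, Set.ncard_coe_finset]

lemma kemeny_sum_eq (R' : RelSub A P) (R : N → RelSub A P) :
    ∑ i, kemenyDist R' (R i) = ∑ p : A × A, pcost R' R p := by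
  calc ∑ i, kemenyDist R' (R i)
      = ∑ i : N, ∑ p : A × A, (if (R'.1 p.1 p.2 ∧ ¬ (R i).1 p.1 p.2) ∨
          ((R i).1 p.1 p.2 ∧ ¬ R'.1 p.1 p.2) then 1 else 0) := by
        refine Finset.sum_congr rfl fun i _ => ?_
        rw [kemenyDist_eq_card, Finset.card_filter]
    _ = ∑ p : A × A, ∑ i : N, (if (R'.1 p.1 p.2 ∧ ¬ (R i).1 p.1 p.2) ∨
          ((R i).1 p.1 p.2 ∧ ¬ R'.1 p.1 p.2) then 1 else 0) := Finset.sum_comm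
    _ = ∑ p : A × A, pcost R' R p := by
        refine Finset.sum_congr rfl fun p _ => ?_
        rw [pcost, Finset.card_filter]

lemma pcost_pos (R' : RelSub A P) (R : N → RelSub A P) (p : A × A)
    (h : R'.1 p.1 p.2) : pcost R' R p + relCnt R p.1 p.2 = Fintype.card N := by
  have he : (Finset.univ.filter fun i =>
      (R'.1 p.1 p.2 ∧ ¬ (R i).1 p.1 p.2) ∨ ((R i).1 p.1 p.2 ∧ ¬ R'.1 p.1 p.2))
      = Finset.univ.filter fun i => ¬ (R i).1 p.1 p.2 := by
    apply Finset.filter_congr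
    intro i _
    constructor
    · rintro (⟨_, hr⟩ | ⟨_, hr⟩)
      · exact hr
      · exact absurd h hr
    · intro hr; exact Or.inl ⟨h, hr⟩
  rw [pcost, he, relCnt]
  have h2 := Finset.card_filter_add_card_filter_not
    (s := (Finset.univ : Finset N)) (p := fun i => (R i).1 p.1 p.2)
  rw [Finset.card_univ] at h2
  omega

lemma pcost_neg (R' : RelSub A P) (R : N → RelSub A P) (p : A × A)
    (h : ¬ R'.1 p.1 p.2) : pcost R' R p = relCnt R p.1 p.2 := by
  have he : (Finset.univ.filter fun i =>
      (R'.1 p.1 p.2 ∧ ¬ (R i).1 p.1 p.2) ∨ ((R i).1 p.1 p.2 ∧ ¬ R'.1 p.1 p.2))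
      = Finset.univ.filter fun i => (R i).1 p.1 p.2 := by
    apply Finset.filter_congr
    intro i _
    constructor
    · rintro (⟨hr, _⟩ | ⟨hr, _⟩)
      · exact absurd hr h
      · exact hr
    · intro hr; exact Or.inr ⟨hr, h⟩
  rw [pcost, he, relCnt]

lemma pcost_opt
    (hodd : Odd (Fintype.card N))
    {R₀ : RelSub A P} {R : N → RelSub A P}
    (hpt : ∀ a b, R₀.1 a b ↔ (Fintype.card N + 2) / 2 ≤ relCnt R a b)
    (R' : RelSub A P) (p : A × A) :
    pcost R₀ R p ≤ pcost R' R p ∧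
      (¬ (R'.1 p.1 p.2 ↔ R₀.1 p.1 p.2) → pcost R₀ R p < pcost R' R p) := by
  obtain ⟨k, hk⟩ := hodd
  have hcle : relCnt R p.1 p.2 ≤ Fintype.card N := by
    have := Finset.card_filter_le (univ : Finset N) fun i => (R i).1 p.1 p.2
    rw [Finset.card_univ] at this
    rw [relCnt]
    exact this
  by_cases h0 : R₀.1 p.1 p.2 <;> by_cases h' : R'.1 p.1 p.2
  · have e1 := pcost_pos R₀ R p h0
    have e2 := pcost_pos R' R p h'
    constructor
    · omega
    · intro hne; exact absurd (iff_of_true h' h0) hne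
  · have e1 := pcost_pos R₀ R p h0
    have e2 := pcost_neg R' R p h'
    have hc := (hpt p.1 p.2).1 h0
    exact ⟨by omega, fun _ => by omega⟩
  · have e1 := pcost_neg R₀ R p h0
    have e2 := pcost_pos R' R p h'
    have hc : ¬ (Fintype.card N + 2) / 2 ≤ relCnt R p.1 p.2 := fun hcc => h0 ((hpt p.1 p.2).2 hcc)
    exact ⟨by omega, fun _ => by omega⟩
  · have e1 := pcost_neg R₀ R p h0
    have e2 := pcost_neg R' R p h'
    constructor
    · omega
    · intro hne; exact absurd (iff_of_false h' h0) hne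

lemma kemeny_min
    (hodd : Odd (Fintype.card N))
    {R₀ : RelSub A P} {R : N → RelSub A P}
    (hpt : ∀ a b, R₀.1 a b ↔ (Fintype.card N + 2) / 2 ≤ relCnt R a b)
    (R' : RelSub A P) :
    ∑ i, kemenyDist R₀ (R i) ≤ ∑ i, kemenyDist R' (R i) := by
  rw [kemeny_sum_eq, kemeny_sum_eq]
  exact Finset.sum_le_sum fun p _ => (pcost_opt hodd hpt R' p).1

lemma kemeny_unique
    (hodd : Odd (Fintype.card N))
    {R₀ : RelSub A P} {R : N → RelSub A P}
    (hpt : ∀ a b, R₀.1 a b ↔ (Fintype.card N + 2) / 2 ≤ relCnt R a b)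
    (R' : RelSub A P)
    (hle : ∑ i, kemenyDist R' (R i) ≤ ∑ i, kemenyDist R₀ (R i)) :
    R' = R₀ := by
  by_contra hne
  have hp : ∃ p : A × A, ¬ (R'.1 p.1 p.2 ↔ R₀.1 p.1 p.2) := by
    by_contra hall
    push_neg at hall
    exact hne (Subtype.ext (funext fun a => funext fun b => propext (hall (a, b))))
  obtain ⟨p₀, hp₀⟩ := hp
  have hlt : ∑ p : A × A, pcost R₀ R p < ∑ p : A × A, pcost R' R p := by
    refine Finset.sum_lt_sum (fun p _ => (pcost_opt hodd hpt R' p).1) ?_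
    exact ⟨p₀, Finset.mem_univ _, (pcost_opt hodd hpt R' p₀).2 hp₀⟩
  rw [kemeny_sum_eq, kemeny_sum_eq] at hle
  omega

end Kemeny

section Pfacts

open Classical Finset

variable {A : Type*} {P : (A → A → Prop) → Prop}

lemma hdiag_of (hP : P = @Reflexive A ∨ P = @Irreflexive A) :
    ∀ (R S : RelSub A P) (a : A), R.1 a a ↔ S.1 a a := by
  rcases hP with rfl | rfl
  · intro R S a; exact iff_of_true (R.2 a) (S.2 a)
  · intro R S a; exact iff_of_false (R.2 a) (S.2 a)

lemma hmk_of (hP : P = @Reflexive A ∨ P = @Irreflexive A) :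
    ∀ q : A → A → Prop, ∃ Q : RelSub A P, ∀ u v, u ≠ v → (Q.1 u v ↔ q u v) := by
  rcases hP with rfl | rfl
  · intro q
    refine ⟨⟨fun u v => u = v ∨ (u ≠ v ∧ q u v), fun a => Or.inl rfl⟩, ?_⟩
    intro u v huv
    constructor
    · rintro (h | ⟨_, h⟩)
      · exact absurd h huv
      · exact h
    · intro h; exact Or.inr ⟨huv, h⟩
  · intro q
    refine ⟨⟨fun u v => u ≠ v ∧ q u v, fun a h => h.1 rfl⟩, ?_⟩
    intro u v huv
    exact ⟨fun h => h.2, fun h => ⟨huv, h⟩⟩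

lemma majRel_exists (hP : P = @Reflexive A ∨ P = @Irreflexive A)
    {N : Type*} [Fintype N] (hodd : Odd (Fintype.card N)) (R : N → RelSub A P) :
    ∃ R₀ : RelSub A P, ∀ a b,
      R₀.1 a b ↔ (Fintype.card N + 2) / 2 ≤ relCnt R a b := by
  obtain ⟨k, hk⟩ := hodd
  rcases hP with rfl | rfl
  · refine ⟨⟨fun a b => (Fintype.card N + 2) / 2 ≤ relCnt R a b, ?_⟩, fun a b => Iff.rfl⟩
    intro a
    have : relCnt R a a = Fintype.card N := by
      rw [relCnt, Finset.filter_true_of_mem fun i _ => (R i).2 a, Finset.card_univ]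
    omega
  · refine ⟨⟨fun a b => (Fintype.card N + 2) / 2 ≤ relCnt R a b, ?_⟩, fun a b => Iff.rfl⟩
    intro a h
    have : relCnt R a a = 0 := by
      rw [relCnt, Finset.filter_false_of_mem fun i _ => (R i).2 a, Finset.card_empty]
    omega

end Pfacts


/-- **Proposition 5.** For `B_A` the reflexive — or irreflexive — binary relations on a
nonempty finite set `A` and an odd number of agents, an aggregation rule satisfies
Anonymity, Bi-Idempotence and strategy-proofness on every rich locally unimodal domain
iff it is the majority rule `f(R_N) = ⋃_{S∈W^maj}(⋂_{i∈S}R_i)` (which then equals the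
co-majority rule `⋂_{S∈W^maj}(⋃_{i∈S}R_i)`), iff it is the generalized
Condorcet-Kemeny rule: at each profile it selects the unique relation in `B_A`
minimizing the sum of Kemeny distances to the profile. -/
theorem relRules_majority_iff_condorcetKemeny
    (A : Type*) [Fintype A] [Nonempty A]
    (P : (A → A → Prop) → Prop) [RelClosed A P]
    (hP : P = @Reflexive A ∨ P = @Irreflexive A)
    {N : Type*} [Fintype N] [DecidableEq N]
    (hodd : Odd (Fintype.card N))
    (f : (N → RelSub A P) → RelSub A P) :
    ((Anonymous f ∧ BiIdempotent f ∧
        ∀ D : Set (Pref (RelSub A P)),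
          RichDomain (RelSub.median (P := P)) D → StrategyProofOn f D) ↔
      ((∀ (R : N → RelSub A P) (a b : A),
          (f R).1 a b ↔ ∃ S : Finset N,
            (Fintype.card N + 2) / 2 ≤ S.card ∧ ∀ i ∈ S, (R i).1 a b) ∧
       (∀ (R : N → RelSub A P) (a b : A),
          (f R).1 a b ↔ ∀ S : Finset N,
            (Fintype.card N + 2) / 2 ≤ S.card → ∃ i ∈ S, (R i).1 a b))) ∧
    ((∀ (R : N → RelSub A P) (a b : A),
        (f R).1 a b ↔ ∃ S : Finset N,
          (Fintype.card N + 2) / 2 ≤ S.card ∧ ∀ i ∈ S, (R i).1 a b) →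
      ∀ R : N → RelSub A P,
        (∀ R' : RelSub A P,
          ∑ i, kemenyDist (f R) (R i) ≤ ∑ i, kemenyDist R' (R i)) ∧
        (∀ R' : RelSub A P,
          (∀ R'' : RelSub A P,
            ∑ i, kemenyDist R' (R i) ≤ ∑ i, kemenyDist R'' (R i)) → R' = f R)) ∧
    ((∀ R : N → RelSub A P,
        (∀ R' : RelSub A P,
          ∑ i, kemenyDist (f R) (R i) ≤ ∑ i, kemenyDist R' (R i)) ∧
        (∀ R' : RelSub A P,
          (∀ R'' : RelSub A P,
            ∑ i, kemenyDist R' (R i) ≤ ∑ i, kemenyDist R'' (R i)) → R' = f R)) →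
      (Anonymous f ∧ BiIdempotent f ∧
        ∀ D : Set (Pref (RelSub A P)),
          RichDomain (RelSub.median (P := P)) D → StrategyProofOn f D)) := by
  refine ⟨⟨?_, ?_⟩, ?_, ?_⟩
  · rintro ⟨hA, hB, hSP⟩
    have hBmu : BMu f := sp_bmu hSP
    have hcount := count_char (hdiag_of hP) (hmk_of hP) hodd hA hB hBmu
    exact ⟨fun R a b => (hcount R a b).trans (count_iff_exists R a b),
      fun R a b => (hcount R a b).trans (count_iff_forall hodd R a b)⟩
  · rintro ⟨h1, _⟩
    have hcount : ∀ (x : N → RelSub A P) (a b : A),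
        (f x).1 a b ↔ (Fintype.card N + 2) / 2 ≤ relCnt x a b :=
      fun x a b => (h1 x a b).trans (count_iff_exists x a b).symm
    exact ⟨anon_of_count hcount, biIdem_of_count hodd hcount,
      sp_of_bmu (bmu_of_count hcount)⟩
  · intro h1 R
    have hpt : ∀ a b, (f R).1 a b ↔ (Fintype.card N + 2) / 2 ≤ relCnt R a b :=
      fun a b => (h1 R a b).trans (count_iff_exists R a b).symm
    exact ⟨kemeny_min hodd hpt,
      fun R' hR' => kemeny_unique hodd hpt R' (hR' (f R))⟩
  · intro hKem
    have hcount : ∀ (R : N → RelSub A P) (a b : A),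
        (f R).1 a b ↔ (Fintype.card N + 2) / 2 ≤ relCnt R a b := by
      intro R a b
      obtain ⟨R₀, hR₀⟩ := majRel_exists hP hodd R
      have heq : R₀ = f R := (hKem R).2 R₀ (kemeny_min hodd hR₀)
      rw [← heq]
      exact hR₀ a b
    exact ⟨anon_of_count hcount, biIdem_of_count hodd hcount,
      sp_of_bmu (bmu_of_count hcount)⟩
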